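/- Let q = p^k be an odd prime power with q > 3 and let G = PSL₂(q). Then for every involution i ∈ G, the centralizer C_G(i) has cardinality q−1 if q ≡ 1 mod 4, and cardinality q+1 if q ≡ 3 mod 4. -/

import Mathlib

namespace PSL2CentralizerProof

open Matrix

variable {F : Type*} [Field F]

/-- The "circle" `x² + y² = 1` in `F × F`. -/
def Circ (F : Type*) [Field F] : Type _ := {v : F × F // v.1 ^ 2 + v.2 ^ 2 = 1}

instance : Fact (Even (Fintype.card (Fin 2))) := ⟨by simp⟩

lemma card_circ_of_sq (i : F) (hi : i * i = -1) (h2 : (2 : F) ≠ 0) [Fintype F] :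
    Nat.card (Circ F) = Fintype.card F - 1 := by
  have hi0 : i ≠ 0 := by
    rintro rfl
    rw [mul_zero] at hi
    exact one_ne_zero (neg_eq_zero.mp hi.symm)
  have e : Fˣ ≃ Circ F :=
  { toFun := fun u => ⟨(((u : F) + ((u⁻¹ : Fˣ) : F)) / 2, ((u : F) - ((u⁻¹ : Fˣ) : F)) / (2 * i)),
      by
        have hu : (u : F) * ((u⁻¹ : Fˣ) : F) = 1 := u.mul_inv
        have h2i : (2 * i) ≠ 0 := mul_ne_zero h2 hi0
        field_simp
        ring_nf
        linear_combination (((u : F) + ((u⁻¹ : Fˣ) : F)) ^ 2 - 4) * hi - 4 * hu⟩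
    invFun := fun v => ⟨v.1.1 + i * v.1.2, v.1.1 - i * v.1.2,
      by linear_combination v.2 - v.1.2 ^ 2 * hi,
      by linear_combination v.2 - v.1.2 ^ 2 * hi⟩
    left_inv := fun u => by
      apply Units.ext
      have hu : (u : F) * ((u⁻¹ : Fˣ) : F) = 1 := u.mul_inv
      have h2i : (2 * i) ≠ 0 := mul_ne_zero h2 hi0
      show ((u : F) + ((u⁻¹ : Fˣ) : F)) / 2 + i * (((u : F) - ((u⁻¹ : Fˣ) : F)) / (2 * i)) = u
      field_simp
      ring
    right_inv := fun v => by
      apply Subtype.ext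
      apply Prod.ext
      · show (((v.1.1 + i * v.1.2) : F) + (v.1.1 - i * v.1.2)) / 2 = v.1.1
        field_simp
        ring
      · show (((v.1.1 + i * v.1.2) : F) - (v.1.1 - i * v.1.2)) / (2 * i) = v.1.2
        field_simp
        ring }
  haveI := Classical.decEq F
  rw [← Nat.card_congr e, Nat.card_eq_fintype_card, Fintype.card_units]

lemma card_circ_of_not_sq (h : ∀ t : F, 1 + t ^ 2 ≠ 0) (h2 : (2 : F) ≠ 0) [Fintype F] :
    Nat.card (Circ F) = Fintype.card F + 1 := by
  haveI := Classical.decEq F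
  have key : ∀ v : Circ F, v.1.1 ≠ -1 → v.1.1 + 1 ≠ 0 ∧ (1 + (v.1.2 / (v.1.1 + 1)) ^ 2) = 2 / (v.1.1 + 1) := by
    rintro ⟨⟨x, y⟩, hv⟩ hx
    have hx1 : x + 1 ≠ 0 := fun hc => hx (by linear_combination hc)
    refine ⟨hx1, ?_⟩
    field_simp
    linear_combination hv
  have e : Option F ≃ Circ F :=
  { toFun := fun o => match o with
      | none => ⟨(-1, 0), by ring⟩
      | some t => ⟨((1 - t ^ 2) / (1 + t ^ 2), 2 * t / (1 + t ^ 2)), by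
          have ht := h t
          field_simp
          ring⟩
    invFun := fun v => if v.1.1 = -1 then none else some (v.1.2 / (v.1.1 + 1))
    left_inv := fun o => by
      match o with
      | none => simp
      | some t =>
        have ht := h t
        have hne : (1 - t ^ 2) / (1 + t ^ 2) ≠ -1 := by
          intro hc
          rw [div_eq_iff ht] at hc
          exact h2 (by linear_combination hc)
        simp only [hne, if_false, Option.some.injEq]
        field_simp [h2]
        rw [show (1:F) - t ^ 2 + (1 + t ^ 2) = 2 by ring, mul_comm (2:F) t, mul_div_assoc, div_self h2, mul_one]
    right_inv := fun v => by
      rcases v with ⟨⟨x, y⟩, hv⟩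
      by_cases hx : x = -1
      · have hy : y = 0 := by
          have : y ^ 2 = 0 := by rw [hx] at hv; linear_combination hv
          exact pow_eq_zero_iff (by norm_num) |>.mp this
        simp only [hx, if_pos rfl]
        apply Subtype.ext
        simp [hx, hy]
      · obtain ⟨hx1, hkey⟩ := key ⟨⟨x, y⟩, hv⟩ hx
        simp only [hx, if_neg hx]
        apply Subtype.ext
        have h2x : (2 : F) / (x + 1) ≠ 0 := div_ne_zero h2 hx1
        apply Prod.ext
        · show (1 - (y / (x + 1)) ^ 2) / (1 + (y / (x + 1)) ^ 2) = x
          rw [hkey, div_eq_iff h2x]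
          field_simp
          linear_combination -hv
        · show 2 * (y / (x + 1)) / (1 + (y / (x + 1)) ^ 2) = y
          rw [hkey]
          field_simp }
  rw [← Nat.card_congr e, Nat.card_eq_fintype_card, Fintype.card_option]

lemma mem_center_iff' {A : SpecialLinearGroup (Fin 2) F} :
    A ∈ Subgroup.center (SpecialLinearGroup (Fin 2) F) ↔ A = 1 ∨ A = -1 := by
  rw [Matrix.SpecialLinearGroup.mem_center_iff]
  constructor
  · rintro ⟨r, hr, hA⟩
    rw [Fintype.card_fin] at hr
    have h0 : (r - 1) * (r + 1) = 0 := by linear_combination hr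
    rcases mul_eq_zero.mp h0 with h | h
    · left; apply Subtype.ext
      rw [← hA, show r = 1 by linear_combination h]
      simp
    · right; apply Subtype.ext
      rw [← hA, show r = -1 by linear_combination h]
      simp [Matrix.SpecialLinearGroup.coe_neg, ← Matrix.smul_one_eq_diagonal]
  · rintro (rfl | rfl)
    · exact ⟨1, by simp, by simp⟩
    · refine ⟨-1, by simp [Fintype.card_fin], by simp [Matrix.SpecialLinearGroup.coe_neg, ← Matrix.smul_one_eq_diagonal]⟩

lemma entries_of_sq_eq_neg_one {A : SpecialLinearGroup (Fin 2) F} (h : A * A = -1) :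
    A.1 1 1 = - A.1 0 0 := by
  have hm : A.1 * A.1 = -(1 : Matrix (Fin 2) (Fin 2) F) := by
    have := congrArg Subtype.val h
    simpa using this
  have hd := A.2
  rw [Matrix.det_fin_two] at hd
  have h00 := congr_fun (congr_fun hm 0) 0
  have h01 := congr_fun (congr_fun hm 0) 1
  have h10 := congr_fun (congr_fun hm 1) 0
  simp [Matrix.mul_apply, Fin.sum_univ_two, Matrix.one_apply] at h00 h01 h10
  set a := A.1 0 0; set b := A.1 0 1; set c := A.1 1 0; set d := A.1 1 1
  rcases eq_or_ne (a + d) 0 with had | had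
  · linear_combination had
  · exfalso
    have hb : b = 0 := by
      rcases mul_eq_zero.mp (show b * (a + d) = 0 by linear_combination h01) with h' | h'
      · exact h'
      · exact absurd h' had
    have hc : c = 0 := by
      rcases mul_eq_zero.mp (show c * (a + d) = 0 by linear_combination h10) with h' | h'
      · exact h'
      · exact absurd h' had
    have ha : a ≠ 0 := by
      intro h'
      rw [h', hb, hc] at h00
      simp at h00
    apply had
    have : a * (a + d) = 0 := by
      rw [hb, hc] at h00 hd
      linear_combination h00 + hd
    rcases mul_eq_zero.mp this with h' | h'
    · exact absurd h' ha
    · exact h'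

lemma eq_one_or_neg_one_of_sq_eq_one {A : SpecialLinearGroup (Fin 2) F} (h : A * A = 1)
    (h2 : (2 : F) ≠ 0) : A = 1 ∨ A = -1 := by
  have hm : A.1 * A.1 = (1 : Matrix (Fin 2) (Fin 2) F) := by
    have := congrArg Subtype.val h
    simpa using this
  have hd := A.2
  rw [Matrix.det_fin_two] at hd
  have h00 := congr_fun (congr_fun hm 0) 0
  have h01 := congr_fun (congr_fun hm 0) 1
  have h10 := congr_fun (congr_fun hm 1) 0
  simp [Matrix.mul_apply, Fin.sum_univ_two, Matrix.one_apply] at h00 h01 h10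
  set a := A.1 0 0 with ha00; set b := A.1 0 1 with ha01
  set c := A.1 1 0 with ha10; set d := A.1 1 1 with ha11
  rcases eq_or_ne (a + d) 0 with had | had
  · exfalso
    apply h2
    linear_combination -h00 - hd + a * had
  · have hb : b = 0 := by
      rcases mul_eq_zero.mp (show b * (a + d) = 0 by linear_combination h01) with h' | h'
      · exact h'
      · exact absurd h' had
    have hc : c = 0 := by
      rcases mul_eq_zero.mp (show c * (a + d) = 0 by linear_combination h10) with h' | h'
      · exact h'
      · exact absurd h' had
    have ha : a ≠ 0 := by
      intro h'
      rw [h', hb, hc] at h00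
      simpa using h00
    have hda : d = a := by
      have : a * (d - a) = 0 := by
        rw [hb, hc] at h00 hd
        linear_combination hd - h00
      rcases mul_eq_zero.mp this with h' | h'
      · exact absurd h' ha
      · linear_combination h'
    have haa : (a - 1) * (a + 1) = 0 := by
      rw [hb, hc] at h00
      linear_combination h00
    rcases mul_eq_zero.mp haa with h' | h'
    · left
      apply Subtype.ext
      ext i j
      fin_cases i <;> fin_cases j <;>
        simp [Matrix.one_apply, ← ha00, ← ha01, ← ha10, ← ha11, hb, hc, hda] <;>
        linear_combination h'
    · right
      apply Subtype.ext
      ext i j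
      fin_cases i <;> fin_cases j <;>
        simp [Matrix.SpecialLinearGroup.coe_neg, Matrix.one_apply, ← ha00, ← ha01, ← ha10, ← ha11,
          hb, hc, hda] <;>
        linear_combination h'

lemma det_smul_one_add_smul (A : SpecialLinearGroup (Fin 2) F) (hA : A.1 1 1 = -A.1 0 0)
    (x y : F) : det (x • (1 : Matrix (Fin 2) (Fin 2) F) + y • A.1) = x ^ 2 + y ^ 2 := by
  have hd := A.2
  rw [Matrix.det_fin_two] at hd ⊢
  rw [hA] at hd
  simp only [Matrix.add_apply, Matrix.smul_apply, Matrix.one_apply, smul_eq_mul]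
  norm_num [hA]
  linear_combination (y ^ 2) * hd

lemma commutant (A : SpecialLinearGroup (Fin 2) F) (hA : A.1 1 1 = -A.1 0 0) (h2 : (2 : F) ≠ 0)
    (B : Matrix (Fin 2) (Fin 2) F) (hBA : B * A.1 = A.1 * B) :
    ∃ x y : F, B = x • (1 : Matrix (Fin 2) (Fin 2) F) + y • A.1 := by
  have hd := A.2
  rw [Matrix.det_fin_two, hA] at hd
  have h00 := congr_fun (congr_fun hBA 0) 0
  have h01 := congr_fun (congr_fun hBA 0) 1
  have h10 := congr_fun (congr_fun hBA 1) 0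
  simp only [Matrix.mul_apply, Fin.sum_univ_two] at h00 h01 h10
  rw [hA] at h01 h10
  set a := A.1 0 0 with ha00; set b := A.1 0 1 with ha01; set c := A.1 1 0 with ha10
  set e := B 0 0 with hb00; set f := B 0 1 with hb01
  set g := B 1 0 with hb10; set h := B 1 1 with hb11
  -- h00 : e * a + f * c = a * e + b * g
  -- h01 : e * b + f * (-a) = a * f + b * h
  -- h10 : g * a + h * c = c * e + (-a) * g
  have key : ∀ x y : F, e = x + y * a → f = y * b → g = y * c → h = x - y * a →
      B = x • (1 : Matrix (Fin 2) (Fin 2) F) + y • A.1 := by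
    intro x y he hf hg hh
    ext i j
    fin_cases i <;> fin_cases j <;>
      simp only [Matrix.add_apply, Matrix.smul_apply, Matrix.one_apply, smul_eq_mul,
        Fin.zero_eta, Fin.mk_one] <;>
      simp [← ha00, ← ha01, ← ha10, ← hb00, ← hb01, ← hb10, ← hb11, hA, he, hf, hg, hh] <;>
      ring
  rcases eq_or_ne b 0 with hb | hb
  · rcases eq_or_ne c 0 with hc | hc
    · -- b = c = 0, a^2 = -1
      have ha2 : a * a = -1 := by rw [hb, hc] at hd; linear_combination -hd
      have ha : (2 : F) * a ≠ 0 := by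
        refine mul_ne_zero h2 fun h' => ?_
        rw [h'] at ha2
        simpa using ha2.symm
      have hf0 : f = 0 := by
        have : f * (2 * a) = 0 := by rw [hb] at h01; linear_combination -h01
        rcases mul_eq_zero.mp this with h' | h'
        · exact h'
        · exact absurd h' ha
      have hg0 : g = 0 := by
        have : g * (2 * a) = 0 := by rw [hc] at h10; linear_combination h10
        rcases mul_eq_zero.mp this with h' | h'
        · exact h'
        · exact absurd h' ha
      refine ⟨(e + h) / 2, (e - h) / (2 * a), key _ _ ?_ ?_ ?_ ?_⟩
      · field_simp
        linear_combination (h - e) * mul_inv_cancel₀ (right_ne_zero_of_mul ha)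
      · rw [hf0, hb, mul_zero]
      · rw [hg0, hc, mul_zero]
      · field_simp
        linear_combination (e - h) * mul_inv_cancel₀ (right_ne_zero_of_mul ha)
    · -- c ≠ 0
      refine ⟨e - (g / c) * a, g / c, key _ _ (by ring) ?_ (by field_simp) ?_⟩
      · -- f = (g/c) * b ; from h00 : f * c = b * g
        rw [div_mul_eq_mul_div, eq_div_iff hc]
        linear_combination h00
      · -- h = e - 2 * (g/c) * a ; from h10 : g * a + h * c = c * e - a * g
        field_simp
        linear_combination h10
  · -- b ≠ 0
    refine ⟨e - (f / b) * a, f / b, key _ _ (by ring) (by field_simp) ?_ ?_⟩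
    · -- g = (f/b) * c ; from h00
      rw [div_mul_eq_mul_div, eq_div_iff hb]
      linear_combination -h00
    · -- h = e - 2 * (f/b) * a ; from h01 : e * b - f * a = a * f + b * h
      field_simp
      linear_combination -h01

lemma smul_one_add_smul_inj (A : SpecialLinearGroup (Fin 2) F) (hA : A.1 1 1 = -A.1 0 0)
    (h2 : (2 : F) ≠ 0) {x y x' y' : F}
    (h : x • (1 : Matrix (Fin 2) (Fin 2) F) + y • A.1
       = x' • (1 : Matrix (Fin 2) (Fin 2) F) + y' • A.1) : x = x' ∧ y = y' := by
  have hd := A.2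
  rw [Matrix.det_fin_two, hA] at hd
  have h00 := congr_fun (congr_fun h 0) 0
  have h01 := congr_fun (congr_fun h 0) 1
  have h10 := congr_fun (congr_fun h 1) 0
  have h11 := congr_fun (congr_fun h 1) 1
  simp only [Matrix.add_apply, Matrix.smul_apply, Matrix.one_apply, smul_eq_mul, hA,
    if_true, if_false, Fin.one_eq_zero_iff, Fin.zero_eq_one_iff, Nat.succ_ne_self,
    ite_true, ite_false, mul_one, mul_zero, add_zero, zero_add, mul_neg] at h00 h01 h10 h11
  set a := A.1 0 0; set b := A.1 0 1; set c := A.1 1 0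
  have hx : x = x' := by
    have : 2 * x = 2 * x' := by linear_combination h00 + h11
    exact mul_left_cancel₀ h2 this
  refine ⟨hx, ?_⟩
  by_contra hy
  have hyy : y - y' ≠ 0 := fun hc => hy (by linear_combination hc)
  have ha : a = 0 := by
    have : (y - y') * a = 0 := by rw [hx] at h00; linear_combination h00
    exact (mul_eq_zero.mp this).resolve_left hyy
  have hb : b = 0 := by
    have : (y - y') * b = 0 := by linear_combination h01
    exact (mul_eq_zero.mp this).resolve_left hyy
  have hc : c = 0 := by
    have : (y - y') * c = 0 := by linear_combination h10
    exact (mul_eq_zero.mp this).resolve_left hyy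
  rw [ha, hb, hc] at hd
  simp at hd

lemma card_centralizer_eq_circ (A : SpecialLinearGroup (Fin 2) F)
    (hA : A.1 1 1 = -A.1 0 0) (h2 : (2 : F) ≠ 0) :
    Nat.card (Subgroup.centralizer ({A} : Set (SpecialLinearGroup (Fin 2) F)))
      = Nat.card (Circ F) := by
  symm
  apply Nat.card_congr
  refine Equiv.ofBijective (fun v =>
    ⟨⟨v.1.1 • (1 : Matrix (Fin 2) (Fin 2) F) + v.1.2 • A.1, by
        rw [det_smul_one_add_smul A hA]; exact v.2⟩, by
      apply Subgroup.mem_centralizer_iff.mpr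
      rintro B hB
      rw [Set.mem_singleton_iff] at hB
      rw [hB]
      apply Subtype.ext
      show A.1 * _ = _ * A.1
      simp only [mul_add, add_mul, mul_smul_comm, smul_mul_assoc, mul_one, one_mul]⟩) ⟨?_, ?_⟩
  · rintro ⟨⟨x, y⟩, hv⟩ ⟨⟨x', y'⟩, hv'⟩ hvv'
    simp only at hvv'
    have hm := congrArg (fun B : Subgroup.centralizer ({A} : Set (SpecialLinearGroup (Fin 2) F)) =>
      ((B : SpecialLinearGroup (Fin 2) F) : Matrix (Fin 2) (Fin 2) F)) hvv'
    obtain ⟨hx, hy⟩ := smul_one_add_smul_inj A hA h2 hm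
    apply Subtype.ext
    exact Prod.ext hx hy
  · rintro ⟨B, hB⟩
    have hBA : B.1 * A.1 = A.1 * B.1 := by
      have := Subgroup.mem_centralizer_iff.mp hB A (Set.mem_singleton A)
      have := congrArg Subtype.val this
      simpa using this.symm
    obtain ⟨x, y, hxy⟩ := commutant A hA h2 B.1 hBA
    have hcirc : x ^ 2 + y ^ 2 = 1 := by
      rw [← det_smul_one_add_smul A hA x y, ← hxy]
      exact B.2
    exact ⟨⟨(x, y), hcirc⟩, Subtype.ext (Subtype.ext hxy.symm)⟩

lemma exists_anticommuting [Fintype F] (A : SpecialLinearGroup (Fin 2) F)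
    (hA : A.1 1 1 = -A.1 0 0) (hodd : Fintype.card F % 2 = 1) :
    ∃ w : SpecialLinearGroup (Fin 2) F, w.1 * A.1 = -(A.1 * w.1) := by
  have sum2 : ∀ s : F, ∃ x y : F, x ^ 2 + y ^ 2 = s := by
    intro s
    obtain ⟨x, y, hxy⟩ := FiniteField.exists_root_sum_quadratic
      (f := (Polynomial.X : Polynomial F) ^ 2)
      (g := (Polynomial.X : Polynomial F) ^ 2 - Polynomial.C s)
      (Polynomial.degree_X_pow 2) (Polynomial.degree_X_pow_sub_C (by norm_num) s) hodd
    refine ⟨x, y, ?_⟩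
    simp only [Polynomial.eval_pow, Polynomial.eval_X, Polynomial.eval_sub,
      Polynomial.eval_C] at hxy
    linear_combination hxy
  have hdetA := A.2
  rw [Matrix.det_fin_two, hA] at hdetA
  obtain ⟨w₀, u, hu, hdet, hw₀⟩ : ∃ (w₀ : Matrix (Fin 2) (Fin 2) F) (u : F),
      u ≠ 0 ∧ det w₀ = u ∧ w₀ * A.1 = -(A.1 * w₀) := by
    rcases eq_or_ne (A.1 0 1) 0 with hb | hb
    · rcases eq_or_ne (A.1 1 0) 0 with hc | hc
      · refine ⟨!![0, 1; 1, 0], -1, by simp, by simp [Matrix.det_fin_two], ?_⟩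
        ext i j
        fin_cases i <;> fin_cases j <;>
          simp [Matrix.mul_apply, Fin.sum_univ_two, hA, hb, hc]
      · refine ⟨!![A.1 1 0, -2 * A.1 0 0; 0, -A.1 1 0], -(A.1 1 0) ^ 2,
          by simpa using hc, by simp [Matrix.det_fin_two]; ring, ?_⟩
        ext i j
        fin_cases i <;> fin_cases j <;>
          simp [Matrix.mul_apply, Fin.sum_univ_two, hA, hb] <;> ring
    · refine ⟨!![A.1 0 1, 0; -2 * A.1 0 0, -A.1 0 1], -(A.1 0 1) ^ 2,
        by simpa using hb, by simp [Matrix.det_fin_two]; ring, ?_⟩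
      ext i j
      fin_cases i <;> fin_cases j <;>
        simp [Matrix.mul_apply, Fin.sum_univ_two, hA] <;> ring
  obtain ⟨x, y, hxy⟩ := sum2 u⁻¹
  have hcomm : (x • (1 : Matrix (Fin 2) (Fin 2) F) + y • A.1) * A.1
      = A.1 * (x • (1 : Matrix (Fin 2) (Fin 2) F) + y • A.1) := by
    simp only [add_mul, mul_add, smul_mul_assoc, mul_smul_comm, one_mul, mul_one]
  refine ⟨⟨w₀ * (x • (1 : Matrix (Fin 2) (Fin 2) F) + y • A.1), ?_⟩, ?_⟩
  · rw [Matrix.det_mul, hdet, det_smul_one_add_smul A hA, hxy, mul_inv_cancel₀ hu]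
  · show w₀ * (x • (1 : Matrix (Fin 2) (Fin 2) F) + y • A.1) * A.1 = _
    rw [mul_assoc, hcomm, ← mul_assoc, hw₀]
    simp [mul_assoc]

lemma card_centralizer_mk [Fintype F] (h2 : (2 : F) ≠ 0) (hodd : Fintype.card F % 2 = 1)
    (A : SpecialLinearGroup (Fin 2) F) (hA : A.1 1 1 = -A.1 0 0) :
    Nat.card (Subgroup.centralizer
      ({QuotientGroup.mk' (Subgroup.center (SpecialLinearGroup (Fin 2) F)) A} :
        Set (SpecialLinearGroup (Fin 2) F ⧸ Subgroup.center (SpecialLinearGroup (Fin 2) F))))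
      = Nat.card (Circ F) := by
  classical
  set π := QuotientGroup.mk' (Subgroup.center (SpecialLinearGroup (Fin 2) F)) with hπ
  set C := Subgroup.centralizer ({π A} :
    Set (SpecialLinearGroup (Fin 2) F ⧸ Subgroup.center (SpecialLinearGroup (Fin 2) F))) with hC
  set N := Subgroup.comap π C with hN
  set C₀ := Subgroup.centralizer ({A} : Set (SpecialLinearGroup (Fin 2) F)) with hC₀
  have hone_ne : (1 : SpecialLinearGroup (Fin 2) F) ≠ -1 := by
    intro hc
    have h0 : ((-1 : SpecialLinearGroup (Fin 2) F) : Matrix (Fin 2) (Fin 2) F) 0 0 = -1 := by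
      simp [Matrix.SpecialLinearGroup.coe_neg]
    have h1 : ((1 : SpecialLinearGroup (Fin 2) F) : Matrix (Fin 2) (Fin 2) F) 0 0 = 1 := by simp
    rw [hc, h0] at h1
    exact h2 (by linear_combination -h1)
  have hC₀mem : ∀ g : SpecialLinearGroup (Fin 2) F, g ∈ C₀ ↔ A * g = g * A := by
    intro g
    rw [hC₀, Subgroup.mem_centralizer_iff]
    simp
  have hmemN : ∀ g : SpecialLinearGroup (Fin 2) F,
      g ∈ N ↔ (g * A = A * g ∨ g * A = -(A * g)) := by
    intro g
    rw [hN, Subgroup.mem_comap, hC, Subgroup.mem_centralizer_iff]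
    simp only [Set.mem_singleton_iff, forall_eq]
    rw [← _root_.map_mul, ← _root_.map_mul, hπ, QuotientGroup.mk'_apply, QuotientGroup.mk'_apply,
      QuotientGroup.eq, mem_center_iff']
    constructor
    · rintro (h | h)
      · left
        rw [inv_mul_eq_one] at h
        exact h.symm
      · right
        rw [inv_mul_eq_iff_eq_mul, mul_neg_one] at h
        exact h
    · rintro (h | h)
      · left
        rw [inv_mul_eq_one]
        exact h.symm
      · right
        rw [inv_mul_eq_iff_eq_mul, mul_neg_one]
        exact h
  obtain ⟨w, hw⟩ := exists_anticommuting A hA hodd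
  have hwG : w * A = -(A * w) := Subtype.ext hw
  have hAinv : A * w⁻¹ = -(w⁻¹ * A) := by
    have h1 := congrArg (fun x : SpecialLinearGroup (Fin 2) F => w⁻¹ * x * w⁻¹) hwG
    simpa only [mul_assoc, mul_neg, neg_mul, inv_mul_cancel_left, mul_inv_cancel,
      inv_mul_cancel, mul_one] using h1
  -- a common contradiction: w cannot centralize A
  have hwnotC : w ∉ C₀ := by
    intro hwC
    have h1 : A * w = -(A * w) := by rw [← hwG]; exact ((hC₀mem w).mp hwC)
    have hv : ((A * w : SpecialLinearGroup (Fin 2) F) : Matrix (Fin 2) (Fin 2) F)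
        = -((A * w : SpecialLinearGroup (Fin 2) F) : Matrix (Fin 2) (Fin 2) F) :=
      Subtype.ext_iff.mp h1
    have h3 : ((A * w : SpecialLinearGroup (Fin 2) F) : Matrix (Fin 2) (Fin 2) F) = 0 := by
      have h4 : (2 : F) • ((A * w : SpecialLinearGroup (Fin 2) F) : Matrix (Fin 2) (Fin 2) F)
          = 0 := by
        rw [two_smul]
        exact add_eq_zero_iff_eq_neg.mpr hv
      rcases smul_eq_zero.mp h4 with h' | h'
      · exact absurd h' h2
      · exact h'
    have h5 := (A * w).2
    rw [h3] at h5
    simp at h5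
  have hNcard : Nat.card N = 2 * Nat.card C₀ := by
    let f : ↥C₀ ⊕ ↥C₀ → ↥N := Sum.elim
      (fun g => ⟨g.1, (hmemN g.1).mpr (Or.inl ((hC₀mem g.1).mp g.2).symm)⟩)
      (fun g => ⟨w * g.1, (hmemN _).mpr (Or.inr (by
        rw [mul_assoc, ← (hC₀mem g.1).mp g.2, ← mul_assoc, hwG]
        simp [mul_assoc]))⟩)
    have hfbij : Function.Bijective f := by
      constructor
      · rintro (g | g) (g' | g') hgg' <;>
          (have h := congrArg Subtype.val hgg';
           simp only [f, Sum.elim_inl, Sum.elim_inr] at h)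
        · exact congrArg Sum.inl (Subtype.ext h)
        · exfalso
          apply hwnotC
          have hww : w = g.1 * (g'.1)⁻¹ := by
            rw [h, mul_assoc, mul_inv_cancel, mul_one]
          rw [hww]
          exact mul_mem g.2 (inv_mem g'.2)
        · exfalso
          apply hwnotC
          have hww : w = g'.1 * (g.1)⁻¹ := by
            rw [← h, mul_assoc, mul_inv_cancel, mul_one]
          rw [hww]
          exact mul_mem g'.2 (inv_mem g.2)
        · exact congrArg Sum.inr (Subtype.ext (mul_left_cancel h))
      · rintro ⟨n, hn⟩
        rcases (hmemN n).mp hn with h | h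
        · exact ⟨Sum.inl ⟨n, (hC₀mem n).mpr h.symm⟩, Subtype.ext rfl⟩
        · refine ⟨Sum.inr ⟨w⁻¹ * n, (hC₀mem _).mpr ?_⟩, Subtype.ext ?_⟩
          · calc A * (w⁻¹ * n) = (A * w⁻¹) * n := (mul_assoc _ _ _).symm
              _ = -(w⁻¹ * A) * n := by rw [hAinv]
              _ = w⁻¹ * -(A * n) := by rw [neg_mul, mul_assoc, mul_neg]
              _ = w⁻¹ * (n * A) := by rw [← h]
              _ = (w⁻¹ * n) * A := (mul_assoc _ _ _).symm
          · show w * (w⁻¹ * n) = n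
            rw [mul_inv_cancel_left]
    rw [← Nat.card_congr (Equiv.ofBijective f hfbij), Nat.card_sum, two_mul]
  have hmemrestr : ∀ n : ↥N, π n.1 ∈ C := fun n => Subgroup.mem_comap.mp n.2
  set φ : ↥N →* ↥C := (π.comp N.subtype).codRestrict C hmemrestr with hφ
  have hφsurj : Function.Surjective φ := by
    rintro ⟨x, hx⟩
    obtain ⟨g, hg⟩ := QuotientGroup.mk'_surjective (Subgroup.center _) x
    have hgN : g ∈ N := by
      rw [hN, Subgroup.mem_comap]
      rw [show π g = x from hg]
      exact hx
    exact ⟨⟨g, hgN⟩, Subtype.ext hg⟩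
  have hker : Nat.card (MonoidHom.ker φ) = 2 := by
    have hm1N : (-1 : SpecialLinearGroup (Fin 2) F) ∈ N := (hmemN _).mpr (Or.inl (by simp))
    have hm1k : (⟨-1, hm1N⟩ : ↥N) ∈ MonoidHom.ker φ := by
      rw [MonoidHom.mem_ker]
      apply Subtype.ext
      show π (-1 : SpecialLinearGroup (Fin 2) F) = 1
      rw [hπ, QuotientGroup.mk'_apply, QuotientGroup.eq_one_iff]
      exact mem_center_iff'.mpr (Or.inr rfl)
    let fk : Bool → ↥(MonoidHom.ker φ) := fun b =>
      if b then ⟨⟨-1, hm1N⟩, hm1k⟩ else 1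
    have hfkbij : Function.Bijective fk := by
      constructor
      · intro b b' hbb'
        cases b <;> cases b'
        · rfl
        · exact absurd (congrArg (fun k : ↥(MonoidHom.ker φ) =>
            (k.1.1 : SpecialLinearGroup (Fin 2) F)) hbb' :
            (1 : SpecialLinearGroup (Fin 2) F) = -1) hone_ne
        · exact absurd (congrArg (fun k : ↥(MonoidHom.ker φ) =>
            (k.1.1 : SpecialLinearGroup (Fin 2) F)) hbb' :
            (-1 : SpecialLinearGroup (Fin 2) F) = 1).symm hone_ne
        · rfl
      · rintro ⟨⟨n, hnN⟩, hnk⟩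
        rw [MonoidHom.mem_ker] at hnk
        have hn1 : π n = 1 := congrArg Subtype.val hnk
        rw [hπ, QuotientGroup.mk'_apply, QuotientGroup.eq_one_iff] at hn1
        rcases mem_center_iff'.mp hn1 with h | h
        · exact ⟨false, Subtype.ext (Subtype.ext h.symm)⟩
        · exact ⟨true, Subtype.ext (Subtype.ext h.symm)⟩
    rw [← Nat.card_congr (Equiv.ofBijective fk hfkbij)]
    simp
  have hiso := QuotientGroup.quotientKerEquivOfSurjective φ hφsurj
  have hNsplit : Nat.card ↥N = Nat.card ↥C * 2 := by
    rw [Subgroup.card_eq_card_quotient_mul_card_subgroup (MonoidHom.ker φ), hker,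
      Nat.card_congr hiso.toEquiv]
  have hC₀circ := card_centralizer_eq_circ A hA h2
  rw [hNcard, hC₀circ] at hNsplit
  show Nat.card ↥C = Nat.card (Circ F)
  omega

end PSL2CentralizerProof

open PSL2CentralizerProof

/-- `PSL₂(F)`: the quotient of `SL₂(F)` by its center. -/
abbrev PSL2 (F : Type*) [Field F] : Type _ :=
  Matrix.SpecialLinearGroup (Fin 2) F ⧸
    Subgroup.center (Matrix.SpecialLinearGroup (Fin 2) F)

/-- Let `q = p^k` be an odd prime power with `q > 3` and
`G = PSL₂(q)`.  Then for every involution `i ∈ G` the centralizer `C_G(i)` has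
cardinality `q−1` if `q ≡ 1 mod 4` and `q+1` if `q ≡ 3 mod 4`. -/
theorem card_centralizer_involution_psl2 (p k q : ℕ) (hp : p.Prime) (hpodd : Odd p)
    (hq : q = p ^ k) (hq3 : 3 < q)
    (F : Type*) [Field F] [Fintype F] (hF : Fintype.card F = q) :
    ∀ i : PSL2 F, orderOf i = 2 →
      (q % 4 = 1 → Nat.card (Subgroup.centralizer ({i} : Set (PSL2 F))) = q - 1) ∧
      (q % 4 = 3 → Nat.card (Subgroup.centralizer ({i} : Set (PSL2 F))) = q + 1) := by
  intro i hi
  have hqodd : Odd q := hq ▸ hpodd.pow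
  have hcardodd : Fintype.card F % 2 = 1 := by rw [hF]; exact Nat.odd_iff.mp hqodd
  have h2 : (2 : F) ≠ 0 := by
    intro hc
    have hd2 : ringChar F ∣ 2 := ringChar.dvd (by exact_mod_cast hc)
    haveI : CharP F (ringChar F) := ringChar.charP F
    rcases (Nat.dvd_prime Nat.prime_two).mp hd2 with h1 | h1
    · have : ((1 : ℕ) : F) = 0 := (CharP.cast_eq_zero_iff F (ringChar F) 1).mpr (by rw [h1])
      simp at this
    · haveI : CharP F 2 := by rw [← h1]; exact ringChar.charP F
      obtain ⟨n, -, hn⟩ := FiniteField.card F 2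
      rw [hn] at hcardodd
      have hdvd : 2 ∣ 2 ^ (n : ℕ) := dvd_pow_self 2 n.pos.ne'
      omega
  -- lift the involution
  obtain ⟨A, hA⟩ := QuotientGroup.mk_surjective i
  have hi2 : i * i = 1 := by
    have := pow_orderOf_eq_one i
    rwa [hi, pow_two] at this
  have hne1 : i ≠ 1 := by
    intro hc
    rw [hc, orderOf_one] at hi
    omega
  have hAA : A * A ∈ Subgroup.center (Matrix.SpecialLinearGroup (Fin 2) F) := by
    rw [← QuotientGroup.eq_one_iff]
    show (QuotientGroup.mk A : PSL2 F) * QuotientGroup.mk A = 1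
    rw [hA, hi2]
  have hAnot : A ∉ Subgroup.center (Matrix.SpecialLinearGroup (Fin 2) F) := by
    intro hc
    exact hne1 (by rw [← hA]; exact (QuotientGroup.eq_one_iff A).mpr hc)
  rcases mem_center_iff'.mp hAA with h1 | h1
  · exfalso
    rcases eq_one_or_neg_one_of_sq_eq_one h1 h2 with rfl | rfl
    · exact hAnot (mem_center_iff'.mpr (Or.inl rfl))
    · exact hAnot (mem_center_iff'.mpr (Or.inr rfl))
  · have htr := entries_of_sq_eq_neg_one h1
    have hmain := card_centralizer_mk h2 hcardodd A htr
    have hii : ({i} : Set (PSL2 F)) =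
        {QuotientGroup.mk' (Subgroup.center (Matrix.SpecialLinearGroup (Fin 2) F)) A} := by
      rw [QuotientGroup.mk'_apply, hA]
    rw [hii]
    constructor
    · intro h4
      have hsq : IsSquare (-1 : F) := FiniteField.isSquare_neg_one_iff.mpr (by rw [hF]; omega)
      obtain ⟨r, hr⟩ := hsq
      rw [hmain, card_circ_of_sq r (by linear_combination -hr) h2, hF]
    · intro h4
      have hns : ¬ IsSquare (-1 : F) := by
        rw [FiniteField.isSquare_neg_one_iff, hF]
        omega
      have hnt : ∀ t : F, 1 + t ^ 2 ≠ 0 := by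
        intro t hc
        exact hns ⟨t, by linear_combination -hc⟩
      rw [hmain, card_circ_of_not_sq hnt h2, hF]
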